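/- arXiv:1908.08319 — 2 statements merged into one kernel-verified Lean document; each statement's English description precedes it below -/
import Mathlib

section
/- Let α ∈ (0,1), t₀ ≤ t* < θ, A ∈ L^∞([t₀,θ], ℝ^{n×n}), and let F be the fundamental matrix satisfying the dual integral equation F(t,s) = Id/Γ(α) + ((t−s)^{1−α}/Γ(α)) ∫_s^t F(t,τ)A(τ)/((t−τ)^{1−α}(τ−s)^{1−α}) dτ. Then for every t ∈ (t*,θ], the identity Id + ∫_{t*}^t F(t,τ)A(τ)/(t−τ)^{1−α} dτ = (1/Γ(1−α)) ∫_{t*}^t F(t,τ)/((t−τ)^{1−α}(τ−t*)^α) dτ holds. -/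
open MeasureTheory Set Real

lemma beta01 {α : ℝ} (hα : α ∈ Set.Ioo (0:ℝ) 1) :
    ∫ x in (0:ℝ)..1, x ^ (-α) * (1 - x) ^ (α - 1) = Real.Gamma (1-α) * Real.Gamma α := by
  have h1 : (0:ℝ) < 1 - α := by linarith [hα.2]
  have hc := Complex.Gamma_mul_Gamma_eq_betaIntegral
    (s := ((1-α : ℝ) : ℂ)) (t := ((α : ℝ) : ℂ))
    (by simpa using h1) (by simpa using hα.1)
  have hsum : ((1-α : ℝ) : ℂ) + ((α : ℝ) : ℂ) = 1 := by push_cast; ring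
  rw [hsum, Complex.Gamma_one, one_mul] at hc
  have hbeta : Complex.betaIntegral ((1-α : ℝ) : ℂ) ((α : ℝ) : ℂ)
      = ((∫ x in (0:ℝ)..1, x ^ (-α) * (1 - x) ^ (α - 1) : ℝ) : ℂ) := by
    rw [Complex.betaIntegral, ← intervalIntegral.integral_ofReal]
    apply intervalIntegral.integral_congr
    intro x hx
    rw [Set.uIcc_of_le (by norm_num : (0:ℝ) ≤ 1)] at hx
    have hx0 : (0:ℝ) ≤ x := hx.1
    have hx1 : (0:ℝ) ≤ 1 - x := by linarith [hx.2]
    have e1 : ((1-α : ℝ) : ℂ) - 1 = ((-α : ℝ) : ℂ) := by push_cast; ring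
    have e2 : ((α : ℝ) : ℂ) - 1 = ((α - 1 : ℝ) : ℂ) := by push_cast; ring
    simp only []
    rw [e1, e2, ← Complex.ofReal_cpow hx0, ← Complex.ofReal_one, ← Complex.ofReal_sub,
      ← Complex.ofReal_cpow hx1]
    push_cast
    ring
  rw [hbeta, Complex.Gamma_ofReal, Complex.Gamma_ofReal, ← Complex.ofReal_mul] at hc
  exact_mod_cast hc.symm

lemma betaInt {α : ℝ} (hα : α ∈ Set.Ioo (0:ℝ) 1) {a b : ℝ} (hab : a < b) :
    IntervalIntegrable (fun s => (s - a) ^ (-α) * (b - s) ^ (α - 1)) volume a b := by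
  have hm1 : a < (a+b)/2 := by linarith
  have hm2 : (a+b)/2 < b := by linarith
  have hg : ∀ c d : ℝ, IntervalIntegrable (fun s => (s - a) ^ (-α)) volume c d := by
    intro c d
    have := (intervalIntegral.intervalIntegrable_rpow' (a := c - a) (b := d - a)
      (r := -α) (by linarith [hα.2])).comp_sub_right a
    simpa using this
  have hh : ∀ c d : ℝ, IntervalIntegrable (fun s => (b - s) ^ (α - 1)) volume c d := by
    intro c d
    have := (intervalIntegral.intervalIntegrable_rpow' (a := b - c) (b := b - d)
      (r := α - 1) (by linarith [hα.1])).comp_sub_left b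
    simpa using this
  apply IntervalIntegrable.trans (b := (a+b)/2)
  · apply IntervalIntegrable.mul_continuousOn (hg a _)
    apply ContinuousOn.rpow_const (by fun_prop)
    intro x hx
    rw [Set.uIcc_of_le hm1.le] at hx
    left; intro h; have : x = b := by linarith [sub_eq_zero.mp h]  -- b - x = 0 → x = b
    nlinarith [hx.2]
  · apply IntervalIntegrable.continuousOn_mul (hh _ b)
    apply ContinuousOn.rpow_const (by fun_prop)
    intro x hx
    rw [Set.uIcc_of_le hm2.le] at hx
    left; intro h; nlinarith [hx.1, sub_eq_zero.mp h]

lemma betaVal {α : ℝ} (hα : α ∈ Set.Ioo (0:ℝ) 1) {a b : ℝ} (hab : a < b) :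
    ∫ s in a..b, (s - a) ^ (-α) * (b - s) ^ (α - 1) = Real.Gamma (1-α) * Real.Gamma α := by
  set c := b - a with hc
  have hc0 : 0 < c := by simp [hc]; linarith
  have e1 : ∫ s in a..b, (s - a) ^ (-α) * (b - s) ^ (α - 1)
      = ∫ x in (0:ℝ)..c, x ^ (-α) * (c - x) ^ (α - 1) := by
    have h := intervalIntegral.integral_comp_add_right (a := 0) (b := c)
      (fun s => (s - a) ^ (-α) * (b - s) ^ (α - 1)) a
    rw [zero_add, hc, sub_add_cancel] at h
    rw [← h]
    apply intervalIntegral.integral_congr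
    intro x hx
    simp only []
    have h1 : x + a - a = x := by ring
    have h2 : b - (x + a) = c - x := by rw [hc]; ring
    rw [h1, h2]
  have e2 : ∫ x in (0:ℝ)..c, x ^ (-α) * (c - x) ^ (α - 1)
      = c • ∫ x in (0:ℝ)..1, (c * x) ^ (-α) * (c - c * x) ^ (α - 1) := by
    rw [intervalIntegral.integral_comp_mul_left (fun x => x ^ (-α) * (c - x) ^ (α - 1)) hc0.ne']
    rw [smul_inv_smul₀ hc0.ne']
    norm_num
  have e3 : ∫ x in (0:ℝ)..1, (c * x) ^ (-α) * (c - c * x) ^ (α - 1)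
      = c⁻¹ * ∫ x in (0:ℝ)..1, x ^ (-α) * (1 - x) ^ (α - 1) := by
    rw [← intervalIntegral.integral_const_mul]
    apply intervalIntegral.integral_congr
    intro x hx
    rw [Set.uIcc_of_le (by norm_num : (0:ℝ) ≤ 1)] at hx
    have hx0 : (0:ℝ) ≤ x := hx.1
    have hx1 : (0:ℝ) ≤ 1 - x := by linarith [hx.2]
    simp only []
    have : c - c * x = c * (1 - x) := by ring
    rw [this, Real.mul_rpow hc0.le hx0, Real.mul_rpow hc0.le hx1]
    have : c ^ (-α) * c ^ (α - 1) = c⁻¹ := by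
      rw [← Real.rpow_add hc0]
      have : -α + (α - 1) = -1 := by ring
      rw [this, Real.rpow_neg_one]
    calc c ^ (-α) * x ^ (-α) * (c ^ (α-1) * (1-x) ^ (α-1))
        = (c ^ (-α) * c ^ (α-1)) * (x ^ (-α) * (1-x) ^ (α-1)) := by ring
      _ = c⁻¹ * (x ^ (-α) * (1 - x) ^ (α - 1)) := by rw [this]
  rw [e1, e2, e3, smul_eq_mul, ← mul_assoc, mul_inv_cancel₀ hc0.ne', one_mul, beta01 hα]

lemma rpowInt {α : ℝ} (hα : 0 < α) (b c d : ℝ) :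
    IntervalIntegrable (fun s => (b - s) ^ (α - 1)) volume c d := by
  have := (intervalIntegral.intervalIntegrable_rpow' (a := b - c) (b := b - d)
    (r := α - 1) (by linarith)).comp_sub_left b
  simpa using this

set_option maxHeartbeats 1000000
set_option synthInstance.maxHeartbeats 100000

/-- If `F` satisfies the dual fundamental-matrix integral equation
`F(t,s) = Id/Γ(α) + ((t-s)^{1-α}/Γ(α)) ∫_s^t (t-τ)^{α-1}(τ-s)^{α-1} F(t,τ)A(τ) dτ`,
then for every `t ∈ (t*,θ]`,
`Id + ∫_{t*}^t (t-τ)^{α-1} F(t,τ)A(τ) dτ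
  = (1/Γ(1-α)) ∫_{t*}^t (t-τ)^{α-1}(τ-t*)^{-α} F(t,τ) dτ`. -/
theorem fundamental_matrix_dual_identity
    (n : ℕ) (α t₀ tst θ : ℝ) (hα : α ∈ Set.Ioo (0 : ℝ) 1)
    (h₁ : t₀ ≤ tst) (h₂ : tst < θ)
    (A : ℝ → (EuclideanSpace ℝ (Fin n) →L[ℝ] EuclideanSpace ℝ (Fin n)))
    (hAm : Measurable A)
    (hAb : eLpNorm A ⊤ (volume.restrict (Set.Icc t₀ θ)) < ⊤)
    (F : ℝ → ℝ → (EuclideanSpace ℝ (Fin n) →L[ℝ] EuclideanSpace ℝ (Fin n)))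
    (hFc : ∀ t ∈ Set.Icc t₀ θ, ContinuousOn (fun s => F t s) (Set.Icc t₀ t))
    (hFeq : ∀ t ∈ Set.Icc t₀ θ, ∀ s ∈ Set.Icc t₀ t,
      F t s = (Real.Gamma α)⁻¹ • (1 : EuclideanSpace ℝ (Fin n) →L[ℝ] EuclideanSpace ℝ (Fin n))
        + ((t - s) ^ (1 - α) / Real.Gamma α) •
            ∫ τ in s..t, ((t - τ) ^ (α - 1) * (τ - s) ^ (α - 1)) • (F t τ * A τ)) :
    ∀ t ∈ Set.Ioc tst θ,
      (1 : EuclideanSpace ℝ (Fin n) →L[ℝ] EuclideanSpace ℝ (Fin n))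
          + (∫ τ in tst..t, ((t - τ) ^ (α - 1)) • (F t τ * A τ))
        = (Real.Gamma (1 - α))⁻¹ •
            ∫ τ in tst..t, ((t - τ) ^ (α - 1) * (τ - tst) ^ (-α)) • F t τ := by
  intro t ht
  obtain ⟨htst, htθ⟩ := ht
  have hα0 := hα.1
  have hα1 := hα.2
  have ht0 : t₀ ≤ t := le_trans h₁ htst.le
  have htI : t ∈ Set.Icc t₀ θ := ⟨ht0, htθ⟩
  have hΓα : (0:ℝ) < Real.Gamma α := Real.Gamma_pos_of_pos hα0
  have hΓα' : (0:ℝ) < Real.Gamma (1-α) := Real.Gamma_pos_of_pos (by linarith)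
  set μ := volume.restrict (Set.Ioc tst t) with hμ
  have hsub : Set.Ioc tst t ⊆ Set.Icc t₀ t := fun τ hτ => ⟨le_trans h₁ hτ.1.le, hτ.2⟩
  have hsubθ : Set.Ioc tst t ⊆ Set.Icc t₀ θ := fun τ hτ =>
    ⟨le_trans h₁ hτ.1.le, le_trans hτ.2 htθ⟩
  -- bound on F
  obtain ⟨C₀, hC₀⟩ := (isCompact_Icc (a := t₀) (b := t)).exists_bound_of_continuousOn (hFc t htI)
  set C := max C₀ 0 with hC
  have hC0 : (0:ℝ) ≤ C := le_max_right _ _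
  have hCF : ∀ τ ∈ Set.Icc t₀ t, ‖F t τ‖ ≤ C := fun τ hτ =>
    le_trans (hC₀ τ hτ) (le_max_left _ _)
  -- bound on A
  set M := (eLpNorm A ⊤ (volume.restrict (Set.Icc t₀ θ))).toReal with hMdef
  have hM0 : (0:ℝ) ≤ M := ENNReal.toReal_nonneg
  have hMae : ∀ᵐ τ ∂(volume.restrict (Set.Icc t₀ θ)), ‖A τ‖ ≤ M := by
    have h := MeasureTheory.ae_le_eLpNormEssSup (f := A) (μ := volume.restrict (Set.Icc t₀ θ))
    rw [MeasureTheory.eLpNorm_exponent_top] at hAb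
    filter_upwards [h] with τ hτ
    have h2 := ENNReal.toReal_mono hAb.ne hτ
    rw [toReal_enorm] at h2
    rw [hMdef, MeasureTheory.eLpNorm_exponent_top]
    exact h2
  have hMμ : ∀ᵐ τ ∂μ, ‖A τ‖ ≤ M :=
    (MeasureTheory.ae_mono (Measure.restrict_mono hsubθ le_rfl)) hMae
  -- measurability
  have hFsm : AEStronglyMeasurable (F t) μ := by
    have h := (hFc t htI).aestronglyMeasurable (μ := volume) (measurableSet_Icc (a := t₀) (b := t))
    exact h.mono_measure (Measure.restrict_mono hsub le_rfl)
  have hφsm : AEStronglyMeasurable (fun τ => F t τ * A τ) μ :=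
    hFsm.mul hAm.stronglyMeasurable.aestronglyMeasurable
  have hφbd : ∀ᵐ τ ∂μ, ‖F t τ * A τ‖ ≤ C * M := by
    filter_upwards [hMμ, ae_restrict_mem measurableSet_Ioc] with τ h1 h2
    calc ‖F t τ * A τ‖ ≤ ‖F t τ‖ * ‖A τ‖ := norm_mul_le _ _
      _ ≤ C * M := mul_le_mul (hCF τ (hsub h2)) h1 (norm_nonneg _) hC0
  -- kernels
  set β : ℝ → ℝ → ℝ := fun s τ => (s - tst) ^ (-α) * ((t - τ) ^ (α - 1) * (τ - s) ^ (α - 1))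
    with hβdef
  set K : ℝ × ℝ → (EuclideanSpace ℝ (Fin n) →L[ℝ] EuclideanSpace ℝ (Fin n)) :=
    fun p => if p.1 < p.2 then (β p.1 p.2) • (F t p.2 * A p.2) else 0 with hKdef
  set K₀ : ℝ × ℝ → ℝ := fun p => if p.1 < p.2 then (C * M) * |β p.1 p.2| else 0 with hK₀def
  have hβmeas : Measurable (fun p : ℝ × ℝ => β p.1 p.2) := by
    simp only [hβdef]
    fun_prop
  have hKsm : AEStronglyMeasurable K (μ.prod μ) := by
    have heq : K = Set.indicator {p : ℝ × ℝ | p.1 < p.2}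
        (fun p => (β p.1 p.2) • (F t p.2 * A p.2)) := by
      funext p; by_cases h : p.1 < p.2 <;> simp [hKdef, Set.indicator, h]
    rw [heq]
    have hb1 : AEStronglyMeasurable (fun p : ℝ × ℝ => β p.1 p.2) (μ.prod μ) :=
      hβmeas.aestronglyMeasurable
    have hb2 : AEStronglyMeasurable (fun p : ℝ × ℝ => F t p.2 * A p.2) (μ.prod μ) := hφsm.comp_snd
    exact AEStronglyMeasurable.indicator
      (hb1.smul hb2)
      (measurableSet_lt measurable_fst measurable_snd)
  have hK₀sm : AEStronglyMeasurable K₀ (μ.prod μ) := by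
    have heq : K₀ = Set.indicator {p : ℝ × ℝ | p.1 < p.2}
        (fun p => (C * M) * |β p.1 p.2|) := by
      funext p; by_cases h : p.1 < p.2 <;> simp [hK₀def, Set.indicator, h]
    rw [heq]
    exact AEStronglyMeasurable.indicator
      ((measurable_const.mul hβmeas.abs).aestronglyMeasurable)
      (measurableSet_lt measurable_fst measurable_snd)
  -- intersections
  have hinter : ∀ τ ∈ Set.Ioc tst t, Set.Iio τ ∩ Set.Ioc tst t = Set.Ioo tst τ := by
    intro τ hτ; ext s
    simp only [Set.mem_inter_iff, Set.mem_Ioc, Set.mem_Iio, Set.mem_Ioo]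
    constructor
    · rintro ⟨h3, h1, h2⟩; exact ⟨h1, h3⟩
    · rintro ⟨h1, h3⟩; exact ⟨h3, h1, le_trans h3.le hτ.2⟩
  have hinter2 : ∀ s ∈ Set.Ioc tst t, Set.Ioi s ∩ Set.Ioc tst t = Set.Ioc s t := by
    intro s hs; ext τ
    simp only [Set.mem_inter_iff, Set.mem_Ioc, Set.mem_Ioi]
    constructor
    · rintro ⟨h3, h1, h2⟩; exact ⟨h3, h2⟩
    · rintro ⟨h3, h2⟩; exact ⟨h3, lt_of_le_of_lt hs.1.le h3, h2⟩
  -- integrability of the beta kernel slices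
  have hβτint : ∀ τ ∈ Set.Ioc tst t,
      IntegrableOn (fun s => (s - tst) ^ (-α) * (τ - s) ^ (α - 1)) (Set.Ioo tst τ) volume := by
    intro τ hτ
    exact ((intervalIntegrable_iff_integrableOn_Ioc_of_le hτ.1.le).mp
      (betaInt hα hτ.1)).mono_set Set.Ioo_subset_Ioc_self
  have hβτint' : ∀ τ ∈ Set.Ioc tst t,
      IntegrableOn (fun s => β s τ) (Set.Ioo tst τ) volume := by
    intro τ hτ
    have h := (hβτint τ hτ).const_mul ((t - τ) ^ (α - 1))
    refine MeasureTheory.IntegrableOn.congr_fun h ?_ measurableSet_Ioo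
    intro s _
    simp only [hβdef]; ring
  -- K₀ is integrable
  have hK₀s : ∀ τ ∈ Set.Ioc tst t, Integrable (fun s => K₀ (s, τ)) μ := by
    intro τ hτ
    have heq : (fun s => K₀ (s, τ)) = Set.indicator (Set.Iio τ) (fun s => (C*M) * |β s τ|) := by
      funext s; by_cases h : s < τ <;> simp [hK₀def, Set.indicator, Set.mem_Iio, h]
    rw [heq, integrable_indicator_iff measurableSet_Iio]
    rw [IntegrableOn, hμ, Measure.restrict_restrict measurableSet_Iio, hinter τ hτ]
    exact ((hβτint' τ hτ).abs.const_mul (C * M))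
  have hnormint : ∀ τ ∈ Set.Ioc tst t, τ ≠ t →
      ∫ s, ‖K₀ (s, τ)‖ ∂μ = ((C*M) * (Real.Gamma (1-α) * Real.Gamma α)) * (t - τ) ^ (α - 1) := by
    intro τ hτ hne
    have hτt : τ < t := lt_of_le_of_ne hτ.2 hne
    have heq : (fun s => ‖K₀ (s, τ)‖)
        = Set.indicator (Set.Iio τ) (fun s => (C*M) * |β s τ|) := by
      funext s
      by_cases h : s < τ
      · simp only [hK₀def, if_pos h, Set.indicator, Set.mem_Iio, h, if_true,
          Real.norm_eq_abs]
        rw [abs_of_nonneg (by positivity)]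
      · simp [hK₀def, Set.indicator, Set.mem_Iio, h]
    rw [heq, integral_indicator measurableSet_Iio, hμ,
      Measure.restrict_restrict measurableSet_Iio, hinter τ hτ]
    have heq2 : ∀ s ∈ Set.Ioo tst τ,
        (C*M) * |β s τ| = ((C*M) * (t - τ) ^ (α - 1)) * ((s - tst) ^ (-α) * (τ - s) ^ (α - 1)) := by
      intro s hs
      have h1 : (0:ℝ) ≤ s - tst := by linarith [hs.1]
      have h2 : (0:ℝ) ≤ τ - s := by linarith [hs.2]
      have h3 : (0:ℝ) ≤ t - τ := by linarith
      rw [abs_of_nonneg (by positivity)]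
      simp only [hβdef]; ring
    rw [setIntegral_congr_fun measurableSet_Ioo heq2, MeasureTheory.integral_const_mul,
      ← MeasureTheory.integral_Ioc_eq_integral_Ioo,
      ← intervalIntegral.integral_of_le hτ.1.le, betaVal hα hτ.1]
    ring
  have hτne : ∀ᵐ τ ∂μ, τ ≠ t := by
    refine ae_restrict_of_ae ?_
    refine ae_iff.mpr ?_
    have : {a : ℝ | ¬ a ≠ t} = {t} := by ext x; simp
    rw [this]
    exact Real.volume_singleton
  have hK₀int2 : Integrable (fun τ => ∫ s, ‖K₀ (s, τ)‖ ∂μ) μ := by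
    have hg : Integrable (fun τ => ((C*M) * (Real.Gamma (1-α) * Real.Gamma α)) * (t - τ) ^ (α - 1)) μ := by
      rw [hμ]
      exact (((intervalIntegrable_iff_integrableOn_Ioc_of_le htst.le).mp
        (rpowInt hα0 t tst t)).const_mul _)
    refine hg.congr ?_
    filter_upwards [ae_restrict_mem measurableSet_Ioc, hτne] with τ h1 h2
    exact (hnormint τ h1 h2).symm
  have hK₀int : Integrable K₀ (μ.prod μ) := by
    refine (integrable_prod_iff' hK₀sm).mpr ⟨?_, hK₀int2⟩
    filter_upwards [ae_restrict_mem measurableSet_Ioc] with τ hτ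
    exact hK₀s τ hτ
  have hbd : ∀ᵐ p ∂μ.prod μ, ‖K p‖ ≤ K₀ p := by
    filter_upwards [Measure.quasiMeasurePreserving_snd.ae hφbd] with p hp
    by_cases h : p.1 < p.2
    · simp only [hKdef, hK₀def, if_pos h]
      calc ‖β p.1 p.2 • (F t p.2 * A p.2)‖ ≤ ‖β p.1 p.2‖ * ‖F t p.2 * A p.2‖ := ContinuousLinearMap.opNorm_smul_le _ _
        _ ≤ |β p.1 p.2| * (C * M) := by
            rw [Real.norm_eq_abs]
            exact mul_le_mul_of_nonneg_left hp (abs_nonneg _)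
        _ = C * M * |β p.1 p.2| := by ring
    · simp only [hKdef, hK₀def, if_neg h, norm_zero, le_refl]
  have hKint : Integrable K (μ.prod μ) := Integrable.mono' hK₀int hKsm hbd
  -- relate G to K
  have hGK : ∀ s ∈ Set.Ioc tst t,
      ((s - tst) ^ (-α)) • (∫ τ in s..t, ((t - τ) ^ (α - 1) * (τ - s) ^ (α - 1)) • (F t τ * A τ))
        = ∫ τ, K (s, τ) ∂μ := by
    intro s hs
    have heq : (fun τ => K (s, τ)) = Set.indicator (Set.Ioi s)
        (fun τ => (β s τ) • (F t τ * A τ)) := by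
      funext τ; by_cases h : s < τ
      · simp only [hKdef, if_pos h, Set.indicator, Set.mem_Ioi, h, if_true]
      · simp only [hKdef, if_neg h, Set.indicator, Set.mem_Ioi, h, if_false]
    rw [heq, integral_indicator measurableSet_Ioi, hμ,
      Measure.restrict_restrict measurableSet_Ioi, hinter2 s hs,
      intervalIntegral.integral_of_le hs.2, ← integral_smul]
    apply setIntegral_congr_fun measurableSet_Ioc
    intro τ _
    dsimp only
    rw [smul_smul]
  -- integrability of the two pieces
  have hf₁ : Integrable (fun s => (((t - s) ^ (α - 1) * (s - tst) ^ (-α)) * (Real.Gamma α)⁻¹) •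
      (1 : EuclideanSpace ℝ (Fin n) →L[ℝ] EuclideanSpace ℝ (Fin n))) μ := by
    apply Integrable.smul_const
    have h := ((intervalIntegrable_iff_integrableOn_Ioc_of_le htst.le).mp
      (betaInt hα htst)).mul_const (Real.Gamma α)⁻¹
    rw [hμ]
    refine MeasureTheory.IntegrableOn.congr_fun h ?_ measurableSet_Ioc
    intro s _
    simp only []
    ring
  have hf₂ : Integrable (fun s => (Real.Gamma α)⁻¹ • (∫ τ, K (s, τ) ∂μ)) μ := by
    exact Integrable.smul ((Real.Gamma α)⁻¹) hKint.integral_prod_left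
  -- main pointwise decomposition
  have hmain : (∫ s, ((t - s) ^ (α - 1) * (s - tst) ^ (-α)) • F t s ∂μ)
      = (∫ s, (((t - s) ^ (α - 1) * (s - tst) ^ (-α)) * (Real.Gamma α)⁻¹) •
            (1 : EuclideanSpace ℝ (Fin n) →L[ℝ] EuclideanSpace ℝ (Fin n)) ∂μ)
        + ∫ s, (Real.Gamma α)⁻¹ • (∫ τ, K (s, τ) ∂μ) ∂μ := by
    rw [← integral_add hf₁ hf₂]
    refine integral_congr_ae ?_
    filter_upwards [ae_restrict_mem measurableSet_Ioc, hτne] with s hs hsne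
    have hsI : s ∈ Set.Icc t₀ t := hsub hs
    have hst' : s < t := lt_of_le_of_ne hs.2 hsne
    rw [hFeq t htI s hsI, smul_add, smul_smul]
    congr 1
    rw [← hGK s hs, smul_smul, smul_smul]
    congr 1
    rw [div_eq_mul_inv]
    have hts : (0:ℝ) < t - s := by linarith
    have hone : (t - s) ^ (α - 1) * (t - s) ^ (1 - α) = 1 := by
      rw [← Real.rpow_add hts]
      norm_num
    calc (t - s) ^ (α - 1) * (s - tst) ^ (-α) * ((t - s) ^ (1 - α) * (Real.Gamma α)⁻¹)
        = ((t - s) ^ (α - 1) * (t - s) ^ (1 - α)) * ((s - tst) ^ (-α) * (Real.Gamma α)⁻¹) := by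
          ring
      _ = (Real.Gamma α)⁻¹ * (s - tst) ^ (-α) := by rw [hone]; ring
  -- value of the first piece
  have hval₁ : (∫ s, (((t - s) ^ (α - 1) * (s - tst) ^ (-α)) * (Real.Gamma α)⁻¹) •
      (1 : EuclideanSpace ℝ (Fin n) →L[ℝ] EuclideanSpace ℝ (Fin n)) ∂μ)
      = Real.Gamma (1-α) • (1 : EuclideanSpace ℝ (Fin n) →L[ℝ] EuclideanSpace ℝ (Fin n)) := by
    rw [integral_smul_const]
    congr 1
    rw [MeasureTheory.integral_mul_const]
    have hv : (∫ s, ((t - s) ^ (α - 1) * (s - tst) ^ (-α)) ∂μ)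
        = Real.Gamma (1-α) * Real.Gamma α := by
      rw [hμ, ← intervalIntegral.integral_of_le htst.le, ← betaVal hα htst]
      apply intervalIntegral.integral_congr
      intro s _
      simp only []
      ring
    rw [hv]
    field_simp
  -- inner value after swapping
  have hinnerval : ∀ᵐ τ ∂μ, (∫ s, K (s, τ) ∂μ)
      = (Real.Gamma (1-α) * Real.Gamma α) • (((t - τ) ^ (α - 1)) • (F t τ * A τ)) := by
    filter_upwards [ae_restrict_mem measurableSet_Ioc, hτne] with τ hτ hne
    have heq : (fun s => K (s, τ)) = Set.indicator (Set.Iio τ)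
        (fun s => (β s τ) • (F t τ * A τ)) := by
      funext s; by_cases h : s < τ
      · simp only [hKdef, if_pos h, Set.indicator, Set.mem_Iio, h, if_true]
      · simp only [hKdef, if_neg h, Set.indicator, Set.mem_Iio, h, if_false]
    rw [heq, integral_indicator measurableSet_Iio, hμ,
      Measure.restrict_restrict measurableSet_Iio, hinter τ hτ]
    have heq2 : ∀ s ∈ Set.Ioo tst τ, (β s τ) • (F t τ * A τ)
        = ((s - tst) ^ (-α) * (τ - s) ^ (α - 1)) • (((t - τ) ^ (α - 1)) • (F t τ * A τ)) := by
      intro s _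
      rw [smul_smul]
      congr 1
      simp only [hβdef]; ring
    rw [setIntegral_congr_fun measurableSet_Ioo heq2, integral_smul_const,
      ← MeasureTheory.integral_Ioc_eq_integral_Ioo, ← intervalIntegral.integral_of_le hτ.1.le,
      betaVal hα hτ.1]
  have hswap := MeasureTheory.integral_integral_swap (f := fun s τ => K (s, τ))
    (μ := μ) (ν := μ) hKint
  -- value of the second piece
  have hval₂ : (∫ s, (Real.Gamma α)⁻¹ • (∫ τ, K (s, τ) ∂μ) ∂μ)
      = Real.Gamma (1-α) • (∫ τ, ((t - τ) ^ (α - 1)) • (F t τ * A τ) ∂μ) := by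
    rw [integral_smul, hswap, integral_congr_ae hinnerval, integral_smul, smul_smul]
    congr 1
    rw [mul_comm (Real.Gamma (1-α)) (Real.Gamma α), ← mul_assoc,
      inv_mul_cancel₀ hΓα.ne', one_mul]
  -- finish
  rw [intervalIntegral.integral_of_le htst.le, intervalIntegral.integral_of_le htst.le,
    ← hμ, hmain, hval₁, hval₂, smul_add, smul_smul, smul_smul,
    inv_mul_cancel₀ hΓα'.ne', one_smul, one_smul]
end

section
/- Let α ∈ (0,1), t₀ < t* < θ, and w* ∈ AC^α([t₀,t*], ℝⁿ), i.e., w*(t) = w*(t₀) + (1/Γ(α)) ∫_{t₀}^t φ*(τ)/(t−τ)^{1−α} dτ for some φ* ∈ L^∞([t₀,t*], ℝⁿ). Define b*(t) = (α/Γ(1−α)) ∫_{t₀}^{t*} (w*(τ)−w*(t₀))/(t−τ)^{1+α} dτ − (w*(t*)−w*(t₀))/(Γ(1−α)(t−t*)^α) for t ∈ (t*,θ], and ψ*(t) = (sin(απ)/π) ∫_{t₀}^{t*} (t*−τ)^α φ*(τ)/(t−τ) dτ for t ∈ [t*,θ]. Then ψ*(t*) = (w*(t*) − w*(t₀))/Γ(1−α),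 and b*(t) = (ψ*(t) − ψ*(t*))/(t−t*)^α for all t ∈ (t*,θ]. -/
open MeasureTheory Set Real

lemma aux_ftc {α t s b : ℝ} (hα0 : 0 < α) (hα1 : α < 1) (hsb : s < b) (hbt : b < t) :
    (∫ τ in s..b, (t - τ) ^ (-(1+α)) * (τ - s) ^ (α - 1)) =
      (α * (t - s))⁻¹ * ((b - s) ^ α * (t - b) ^ (-α)) := by
  have hst : s < t := hsb.trans hbt
  have htb : (0:ℝ) < t - b := by linarith
  have hts : (0:ℝ) < t - s := by linarith
  have hα : α ≠ 0 := hα0.ne'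
  set F : ℝ → ℝ := fun τ => (α * (t - s))⁻¹ * ((τ - s) ^ α * (t - τ) ^ (-α)) with hF
  have hcont : ContinuousOn F (Icc s b) := by
    apply continuousOn_const.mul
    apply ContinuousOn.mul
    · exact ((continuous_id.sub continuous_const).rpow_const
        (fun x => Or.inr hα0.le)).continuousOn
    · intro x hx
      have hx' : t - x ≠ 0 := ne_of_gt (by linarith [hx.2] : (0:ℝ) < t - x)
      exact ((Real.continuousAt_rpow_const _ _ (Or.inl hx')).comp
        ((continuous_const.sub continuous_id).continuousAt)).continuousWithinAt
  have hderiv : ∀ x ∈ Ioo s b,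
      HasDerivWithinAt F ((t - x) ^ (-(1+α)) * (x - s) ^ (α - 1)) (Ioi x) x := by
    intro x hx
    have hxs : (0:ℝ) < x - s := by linarith [hx.1]
    have hxt : (0:ℝ) < t - x := by linarith [hx.2]
    have h1 : HasDerivAt (fun τ : ℝ => (τ - s) ^ α) (1 * α * (x - s) ^ (α - 1)) x :=
      ((hasDerivAt_id x).sub_const s).rpow_const (Or.inl hxs.ne')
    have h2 : HasDerivAt (fun τ : ℝ => (t - τ) ^ (-α)) (-1 * -α * (t - x) ^ (-α - 1)) x :=
      ((hasDerivAt_id x).const_sub t).rpow_const (Or.inl hxt.ne')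
    have h3 := (h1.mul h2).const_mul ((α * (t - s))⁻¹)
    have heq : (α * (t - s))⁻¹ *
        (1 * α * (x - s) ^ (α - 1) * (t - x) ^ (-α) +
          (x - s) ^ α * (-1 * -α * (t - x) ^ (-α - 1))) =
        (t - x) ^ (-(1+α)) * (x - s) ^ (α - 1) := by
      have e1 : (t - x) ^ (-α) = (t - x) ^ (-(1+α)) * (t - x) := by
        have h := Real.rpow_add hxt (-(1+α)) 1
        rw [Real.rpow_one] at h
        rw [← h]
        congr 1
        ring
      have e2 : (x - s) ^ α = (x - s) ^ (α - 1) * (x - s) := by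
        have h := Real.rpow_add hxs (α - 1) 1
        rw [Real.rpow_one] at h
        rw [← h]
        congr 1
        ring
      have e3 : (t - x) ^ (-α - 1) = (t - x) ^ (-(1+α)) := by
        congr 1
        ring
      rw [e1, e2, e3]
      field_simp
      ring
    rw [heq] at h3
    exact h3.hasDerivWithinAt
  have hint : IntervalIntegrable (fun τ => (t - τ) ^ (-(1+α)) * (τ - s) ^ (α - 1))
      volume s b := by
    have base : IntervalIntegrable (fun x : ℝ => x ^ (α - 1)) volume 0 (b - s) :=
      intervalIntegral.intervalIntegrable_rpow' (by linarith)
    have comp := base.comp_sub_right s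
    have comp' : IntervalIntegrable (fun x : ℝ => (x - s) ^ (α - 1)) volume s b := by
      simpa using comp
    apply comp'.continuousOn_mul
    intro x hx
    rw [uIcc_of_le hsb.le] at hx
    have hx' : t - x ≠ 0 := ne_of_gt (by linarith [hx.2] : (0:ℝ) < t - x)
    exact ((Real.continuousAt_rpow_const _ _ (Or.inl hx')).comp
      ((continuous_const.sub continuous_id).continuousAt)).continuousWithinAt
  rw [intervalIntegral.integral_eq_sub_of_hasDeriv_right_of_le hsb.le hcont hderiv hint]
  simp only [hF, sub_self, Real.zero_rpow hα, zero_mul, mul_zero, sub_zero]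

lemma aux_shift {α a τ : ℝ} (hα0 : 0 < α) :
    (∫ s in a..τ, (τ - s) ^ (α - 1)) = (τ - a) ^ α / α := by
  rw [intervalIntegral.integral_comp_sub_left (fun x : ℝ => x ^ (α - 1)) τ]
  rw [sub_self, integral_rpow (Or.inl (by linarith))]
  have h1 : α - 1 + 1 = α := by ring
  rw [h1, Real.zero_rpow hα0.ne', sub_zero]

/-- For `w*` fractionally absolutely continuous on `[t₀,t*]` with density `φ*`,
`ψ*(t) = (sin(απ)/π) ∫_{t₀}^{t*} (t*-τ)^α (t-τ)⁻¹ φ*(τ) dτ` satisfies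
`ψ*(t*) = (w*(t*) − w*(t₀))/Γ(1−α)`, and the auxiliary inhomogeneity
`b*(t) = (α/Γ(1−α)) ∫_{t₀}^{t*} (t-τ)^{-1-α}(w*(τ)−w*(t₀)) dτ
  − (w*(t*)−w*(t₀))/(Γ(1−α)(t−t*)^α)` equals `(ψ*(t) − ψ*(t*))/(t−t*)^α` on `(t*,θ]`. -/
theorem auxiliary_inhomogeneity_identity
    (n : ℕ) (α t₀ tst θ : ℝ) (hα : α ∈ Set.Ioo (0 : ℝ) 1)
    (h₁ : t₀ < tst) (h₂ : tst < θ)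
    (w : ℝ → EuclideanSpace ℝ (Fin n))
    (φ : ℝ → EuclideanSpace ℝ (Fin n)) (hφm : Measurable φ)
    (hφb : eLpNorm φ ⊤ (volume.restrict (Set.Icc t₀ tst)) < ⊤)
    (hw : ∀ t ∈ Set.Icc t₀ tst,
      w t = w t₀ + (Real.Gamma α)⁻¹ • ∫ τ in t₀..t, ((t - τ) ^ (α - 1)) • φ τ)
    (ψ : ℝ → EuclideanSpace ℝ (Fin n))
    (hψ : ∀ t ∈ Set.Icc tst θ,
      ψ t = (Real.sin (α * π) / π) •
        ∫ τ in t₀..tst, ((tst - τ) ^ α / (t - τ)) • φ τ)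
    (bst : ℝ → EuclideanSpace ℝ (Fin n))
    (hbst : ∀ t ∈ Set.Ioc tst θ,
      bst t = (α / Real.Gamma (1 - α)) •
          (∫ τ in t₀..tst, ((t - τ) ^ (-(1 + α))) • (w τ - w t₀))
        - (Real.Gamma (1 - α) * (t - tst) ^ α)⁻¹ • (w tst - w t₀)) :
    ψ tst = (Real.Gamma (1 - α))⁻¹ • (w tst - w t₀) ∧
    ∀ t ∈ Set.Ioc tst θ, bst t = ((t - tst) ^ α)⁻¹ • (ψ t - ψ tst) := by
  obtain ⟨hα0, hα1⟩ := hα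
  have hΓα : 0 < Real.Gamma α := Real.Gamma_pos_of_pos hα0
  have hΓβ : 0 < Real.Gamma (1 - α) := Real.Gamma_pos_of_pos (by linarith)
  have hπ : (0:ℝ) < π := Real.pi_pos
  have hsin : 0 < Real.sin (α * π) := by
    rw [mul_comm]
    exact Real.sin_pos_of_pos_of_lt_pi (by positivity) (by nlinarith)
  have hsinval : Real.sin (α * π) / π = (Real.Gamma α * Real.Gamma (1 - α))⁻¹ := by
    rw [Real.Gamma_mul_Gamma_one_sub α, inv_div, mul_comm α π]
  have hrefl : Real.sin (α * π) / π * Real.Gamma α = (Real.Gamma (1 - α))⁻¹ := by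
    rw [hsinval, mul_inv]
    field_simp
  -- Part (a)
  have hpsist : ψ tst = (Real.Gamma (1 - α))⁻¹ • (w tst - w t₀) := by
    have hcong : EqOn (fun τ => ((tst - τ) ^ α / (tst - τ)) • φ τ)
        (fun τ => ((tst - τ) ^ (α - 1)) • φ τ) (uIcc t₀ tst) := by
      intro τ hτ
      rw [uIcc_of_le h₁.le] at hτ
      simp only
      rcases eq_or_lt_of_le hτ.2 with h | h
      · rw [h]
        simp [Real.zero_rpow hα0.ne', Real.zero_rpow (show α - 1 ≠ 0 by linarith)]
      · have hpos : 0 < tst - τ := by linarith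
        rw [Real.rpow_sub hpos, Real.rpow_one]
    have hJeq : (∫ τ in t₀..tst, ((tst - τ) ^ (α - 1)) • φ τ)
        = Real.Gamma α • (w tst - w t₀) := by
      have hw' := hw tst ⟨h₁.le, le_refl tst⟩
      have : w tst - w t₀ = (Real.Gamma α)⁻¹ •
          ∫ τ in t₀..tst, ((tst - τ) ^ (α - 1)) • φ τ := by
        rw [hw']; exact add_sub_cancel_left _ _
      rw [this, smul_smul, mul_inv_cancel₀ hΓα.ne', one_smul]
    rw [hψ tst ⟨le_refl tst, h₂.le⟩, intervalIntegral.integral_congr hcong, hJeq,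
      smul_smul, hrefl]
  refine ⟨hpsist, ?_⟩
  intro t ht
  have ht1 : tst < t := ht.1
  have htt : (0:ℝ) < t - tst := by linarith
  set μ : Measure ℝ := volume.restrict (Ioc t₀ tst) with hμ
  set C : ℝ := (eLpNorm φ ⊤ (volume.restrict (Icc t₀ tst))).toReal with hCdef
  have hC0 : 0 ≤ C := ENNReal.toReal_nonneg
  have hCae : ∀ᵐ s ∂(volume.restrict (Icc t₀ tst)), ‖φ s‖ ≤ C := by
    filter_upwards [MeasureTheory.ae_le_eLpNormEssSup
      (f := φ) (μ := volume.restrict (Icc t₀ tst))] with s hs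
    have h1 : (‖φ s‖₊ : ENNReal) ≤ eLpNorm φ ⊤ (volume.restrict (Icc t₀ tst)) := by
      rw [MeasureTheory.eLpNorm_exponent_top]; exact hs
    calc ‖φ s‖ = ((‖φ s‖₊ : ENNReal)).toReal := by simp
      _ ≤ C := ENNReal.toReal_mono hφb.ne h1
  have hCμ : ∀ᵐ s ∂μ, ‖φ s‖ ≤ C :=
    hCae.filter_mono (ae_mono (Measure.restrict_mono Ioc_subset_Icc_self le_rfl))
  set K : ℝ → ℝ → ℝ := fun τ s => (t - τ) ^ (-(1+α)) * (τ - s) ^ (α - 1) with hK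
  set f : ℝ → ℝ → EuclideanSpace ℝ (Fin n) :=
    fun τ s => if s < τ then K τ s • φ s else 0 with hf
  set M : ℝ := (t - tst) ^ (-(1+α)) with hM
  have hM0 : 0 ≤ M := Real.rpow_nonneg htt.le _
  have hrpow_meas : ∀ c : ℝ, Measurable (fun x : ℝ => x ^ c) := by
    intro c
    apply measurable_of_continuousOn_compl_singleton (0:ℝ)
    intro x hx
    exact (Real.continuousAt_rpow_const x c (Or.inl (by simpa using hx))).continuousWithinAt
  have hfum : AEStronglyMeasurable (Function.uncurry f) (μ.prod μ) := by
    apply Measurable.aestronglyMeasurable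
    apply Measurable.ite (measurableSet_lt measurable_snd measurable_fst)
    · exact ((((hrpow_meas _).comp (measurable_const.sub measurable_fst)).mul
        ((hrpow_meas _).comp (measurable_fst.sub measurable_snd))).smul
        (hφm.comp measurable_snd))
    · exact measurable_const
  have hKabs : ∀ τ ∈ Ioc t₀ tst, ∀ s ∈ Ioo t₀ τ,
      |K τ s| ≤ M * (τ - s) ^ (α - 1) := by
    intro τ hτ s hs
    have h1 : (0:ℝ) < t - τ := by linarith [hτ.2]
    have h2 : (0:ℝ) ≤ (τ - s) ^ (α - 1) := Real.rpow_nonneg (by linarith [hs.2]) _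
    rw [hK, abs_of_nonneg (mul_nonneg (Real.rpow_nonneg h1.le _) h2)]
    apply mul_le_mul_of_nonneg_right _ h2
    exact Real.rpow_le_rpow_of_nonpos htt (by linarith [hτ.2]) (by linarith)
  have hIoo_int : ∀ τ ∈ Ioc t₀ tst,
      IntegrableOn (fun s => (τ - s) ^ (α - 1)) (Ioo t₀ τ) volume := by
    intro τ hτ
    have base : IntervalIntegrable (fun x : ℝ => x ^ (α - 1)) volume 0 (τ - t₀) :=
      intervalIntegral.intervalIntegrable_rpow' (by linarith)
    have comp := (base.comp_sub_left τ).symm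
    have comp' : IntervalIntegrable (fun s : ℝ => (τ - s) ^ (α - 1)) volume t₀ τ := by
      simpa using comp
    exact ((intervalIntegrable_iff_integrableOn_Ioc_of_le hτ.1.le).mp comp').mono_set
      Ioo_subset_Ioc_self
  have hfint : ∀ τ ∈ Ioc t₀ tst,
      IntegrableOn (fun s => K τ s • φ s) (Ioo t₀ τ) volume := by
    intro τ hτ
    apply Integrable.mono' ((hIoo_int τ hτ).const_mul (C * M))
    · exact ((measurable_const.mul
        ((hrpow_meas _).comp (measurable_const.sub measurable_id))).smul
        hφm).aestronglyMeasurable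
    · have hCIoo : ∀ᵐ s ∂(volume.restrict (Ioo t₀ τ)), ‖φ s‖ ≤ C :=
        hCae.filter_mono (ae_mono (Measure.restrict_mono
          (fun x hx => mem_Icc.mpr ⟨(mem_Ioo.mp hx).1.le,
            (mem_Ioo.mp hx).2.le.trans hτ.2⟩) le_rfl))
      filter_upwards [ae_restrict_mem measurableSet_Ioo, hCIoo] with s hs hsC
      rw [norm_smul, Real.norm_eq_abs]
      calc |K τ s| * ‖φ s‖ ≤ (M * (τ - s) ^ (α - 1)) * C :=
            mul_le_mul (hKabs τ hτ s hs) hsC (norm_nonneg _)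
              (mul_nonneg hM0 (Real.rpow_nonneg (by linarith [hs.2]) _))
        _ = C * M * (τ - s) ^ (α - 1) := by ring
  have hset : ∀ τ ∈ Ioc t₀ tst, Iio τ ∩ Ioc t₀ tst = Ioo t₀ τ := by
    intro τ hτ
    ext x
    simp only [mem_inter_iff, mem_Iio, mem_Ioc, mem_Ioo]
    constructor
    · rintro ⟨hx1, hx2, _⟩; exact ⟨hx2, hx1⟩
    · rintro ⟨hx1, hx2⟩; exact ⟨hx2, hx1, hx2.le.trans hτ.2⟩
  have hfInt : Integrable (Function.uncurry f) (μ.prod μ) := by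
    rw [MeasureTheory.integrable_prod_iff hfum]
    constructor
    · filter_upwards [ae_restrict_mem measurableSet_Ioc] with τ hτ
      have hind : (fun s => f τ s) = (Iio τ).indicator (fun s => K τ s • φ s) := by
        funext s; simp [hf, Set.indicator_apply]
      show Integrable (fun s => f τ s) μ
      rw [hind, MeasureTheory.integrable_indicator_iff measurableSet_Iio]
      show Integrable _ (μ.restrict (Iio τ))
      rw [hμ, Measure.restrict_restrict measurableSet_Iio, hset τ hτ]
      exact hfint τ hτ
    · apply Integrable.mono' (g := fun _ => C * M * ((tst - t₀) ^ α / α))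
      · exact integrableOn_const measure_Ioc_lt_top.ne
      · exact hfum.norm.integral_prod_right'
      · filter_upwards [ae_restrict_mem measurableSet_Ioc] with τ hτ
        have hnn : 0 ≤ ∫ s, ‖f τ s‖ ∂μ := integral_nonneg (fun s => norm_nonneg _)
        show ‖∫ s, ‖f τ s‖ ∂μ‖ ≤ C * M * ((tst - t₀) ^ α / α)
        rw [Real.norm_of_nonneg hnn]
        set g0 : ℝ → ℝ := (Ioo t₀ τ).indicator
          (fun s => C * M * (τ - s) ^ (α - 1)) with hg0
        have hsub : Ioo t₀ τ ∩ Ioc t₀ tst = Ioo t₀ τ :=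
          inter_eq_left.2 (fun x hx => ⟨hx.1, hx.2.le.trans hτ.2⟩)
        have hg0i : Integrable g0 μ := by
          rw [hg0, MeasureTheory.integrable_indicator_iff measurableSet_Ioo]
          show Integrable _ (μ.restrict (Ioo t₀ τ))
          rw [hμ, Measure.restrict_restrict measurableSet_Ioo, hsub]
          exact (hIoo_int τ hτ).const_mul _
        have hle : ∀ᵐ s ∂μ, ‖f τ s‖ ≤ g0 s := by
          filter_upwards [ae_restrict_mem measurableSet_Ioc, hCμ] with s hs hsC
          by_cases hsτ : s < τ
          · have hmem : s ∈ Ioo t₀ τ := ⟨hs.1, hsτ⟩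
            have hfv : f τ s = K τ s • φ s := if_pos hsτ
            rw [hg0, Set.indicator_of_mem hmem, hfv, norm_smul, Real.norm_eq_abs]
            calc |K τ s| * ‖φ s‖ ≤ (M * (τ - s) ^ (α - 1)) * C :=
                  mul_le_mul (hKabs τ hτ s hmem) hsC (norm_nonneg _)
                    (mul_nonneg hM0 (Real.rpow_nonneg (by linarith [hmem.2]) _))
              _ = C * M * (τ - s) ^ (α - 1) := by ring
          · have hfv : f τ s = 0 := if_neg hsτ
            rw [hfv, norm_zero, hg0]
            exact Set.indicator_nonneg
              (fun x hx => mul_nonneg (mul_nonneg hC0 hM0)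
                (Real.rpow_nonneg (by linarith [hx.2]) _)) s
        calc (∫ s, ‖f τ s‖ ∂μ) ≤ ∫ s, g0 s ∂μ :=
              integral_mono_of_nonneg
                (Filter.Eventually.of_forall fun s => norm_nonneg _) hg0i hle
          _ = C * M * ((τ - t₀) ^ α / α) := by
              rw [hg0, MeasureTheory.integral_indicator measurableSet_Ioo, hμ,
                Measure.restrict_restrict measurableSet_Ioo, hsub,
                MeasureTheory.integral_const_mul,
                ← MeasureTheory.integral_Ioc_eq_integral_Ioo,
                ← intervalIntegral.integral_of_le hτ.1.le, aux_shift hα0]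
          _ ≤ C * M * ((tst - t₀) ^ α / α) := by
              apply mul_le_mul_of_nonneg_left _ (mul_nonneg hC0 hM0)
              exact (div_le_div_iff_of_pos_right hα0).mpr
                (Real.rpow_le_rpow (by linarith [hτ.1]) (by linarith [hτ.2]) hα0.le)
  -- pointwise identification of the inner integrals
  have inner_eq : ∀ τ ∈ Ioc t₀ tst,
      (∫ s, f τ s ∂μ) = ∫ s in t₀..τ, (K τ s) • φ s := by
    intro τ hτ
    have hind : (fun s => f τ s) = (Iio τ).indicator (fun s => K τ s • φ s) := by
      funext s; simp [hf, Set.indicator_apply]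
    rw [hind, MeasureTheory.integral_indicator measurableSet_Iio, hμ,
      Measure.restrict_restrict measurableSet_Iio, hset τ hτ,
      ← MeasureTheory.integral_Ioc_eq_integral_Ioo,
      ← intervalIntegral.integral_of_le hτ.1.le]
  have outer_eq : ∀ s ∈ Ioc t₀ tst,
      (∫ τ, f τ s ∂μ) = (∫ τ in s..tst, K τ s) • φ s := by
    intro s hs
    have hind : (fun τ => f τ s) = (Ioi s).indicator (fun τ => K τ s • φ s) := by
      funext τ; simp [hf, Set.indicator_apply]
    have hset2 : Ioi s ∩ Ioc t₀ tst = Ioc s tst := by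
      ext x
      simp only [mem_inter_iff, mem_Ioi, mem_Ioc]
      constructor
      · rintro ⟨hx1, _, hx3⟩; exact ⟨hx1, hx3⟩
      · rintro ⟨hx1, hx2⟩; exact ⟨hx1, hs.1.trans hx1, hx2⟩
    rw [hind, MeasureTheory.integral_indicator measurableSet_Ioi, hμ,
      Measure.restrict_restrict measurableSet_Ioi, hset2,
      ← intervalIntegral.integral_of_le hs.2]
    exact intervalIntegral.integral_smul_const _ _
  have outer_val : ∀ s ∈ Ioc t₀ tst,
      (∫ τ in s..tst, K τ s) =
        (α * (t - s))⁻¹ * ((tst - s) ^ α * (t - tst) ^ (-α)) := by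
    intro s hs
    rcases eq_or_lt_of_le hs.2 with h | h
    · rw [h]
      simp [Real.zero_rpow hα0.ne']
    · simpa only [hK] using aux_ftc hα0 hα1 h ht1
  -- the key identity
  set J : EuclideanSpace ℝ (Fin n) :=
    ∫ s in t₀..tst, ((tst - s) ^ α / (t - s)) • φ s with hJ
  have key : (∫ τ in t₀..tst, ((t - τ) ^ (-(1 + α))) • (w τ - w t₀))
      = ((Real.Gamma α)⁻¹ * ((t - tst) ^ (-α) / α)) • J := by
    have step1 : (∫ τ in t₀..tst, ((t - τ) ^ (-(1 + α))) • (w τ - w t₀))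
        = (Real.Gamma α)⁻¹ • ∫ τ in t₀..tst, (∫ s in t₀..τ, (K τ s) • φ s) := by
      rw [← intervalIntegral.integral_smul]
      apply intervalIntegral.integral_congr
      intro τ hτ
      rw [uIcc_of_le h₁.le] at hτ
      have hwτ : w τ - w t₀ = (Real.Gamma α)⁻¹ •
          ∫ s in t₀..τ, ((τ - s) ^ (α - 1)) • φ s := by
        rw [hw τ hτ]; exact add_sub_cancel_left _ _
      simp only
      rw [hwτ, smul_comm]
      congr 1
      rw [← intervalIntegral.integral_smul]
      apply intervalIntegral.integral_congr
      intro s _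
      simp only [hK, smul_smul]
    have step2 : (∫ τ in t₀..tst, (∫ s in t₀..τ, (K τ s) • φ s))
        = ∫ s in t₀..tst,
            ((α * (t - s))⁻¹ * ((tst - s) ^ α * (t - tst) ^ (-α))) • φ s := by
      rw [intervalIntegral.integral_of_le h₁.le, intervalIntegral.integral_of_le h₁.le]
      calc (∫ τ in Ioc t₀ tst, (∫ s in t₀..τ, K τ s • φ s))
          = ∫ τ, (∫ s, f τ s ∂μ) ∂μ :=
            (setIntegral_congr_fun measurableSet_Ioc
              (fun τ hτ => (inner_eq τ hτ).symm))
        _ = ∫ s, (∫ τ, f τ s ∂μ) ∂μ := MeasureTheory.integral_integral_swap hfInt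
        _ = ∫ s in Ioc t₀ tst,
              ((α * (t - s))⁻¹ * ((tst - s) ^ α * (t - tst) ^ (-α))) • φ s := by
            apply setIntegral_congr_fun measurableSet_Ioc
            intro s hs
            show (∫ τ, f τ s ∂μ)
              = ((α * (t - s))⁻¹ * ((tst - s) ^ α * (t - tst) ^ (-α))) • φ s
            rw [outer_eq s hs, outer_val s hs]
    have step3 : (∫ s in t₀..tst,
          ((α * (t - s))⁻¹ * ((tst - s) ^ α * (t - tst) ^ (-α))) • φ s)
        = ((t - tst) ^ (-α) / α) • J := by
      rw [hJ, ← intervalIntegral.integral_smul]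
      apply intervalIntegral.integral_congr
      intro s hs
      rw [uIcc_of_le h₁.le] at hs
      have hts : t - s ≠ 0 := ne_of_gt (by linarith [hs.2] : (0:ℝ) < t - s)
      simp only [smul_smul]
      congr 1
      field_simp
    rw [step1, step2, step3, smul_smul]
  -- conclusion
  rw [hbst t ht, key, hψ t ⟨ht.1.le, ht.2⟩, hpsist, ← hJ, hsinval,
    Real.rpow_neg htt.le]
  have hX : (0:ℝ) < (t - tst) ^ α := Real.rpow_pos_of_pos htt α
  match_scalars
  all_goals field_simp
  all_goals ring
end
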